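/- For two independent uniform random variables $x_1, x_2$ on $(0,1]$ and distinct weights $w_1 > w_2 > 0$, $\mathrm{Prob}(x_1^{w_1} x_2^{w_2} \le \tau) = (w_1 - w_2)^{-1}[w_1 \tau^{1/w_1} - w_2 \tau^{1/w_2}]$ for $\tau \in (0,1]$. -/

import Mathlib

open MeasureTheory ProbabilityTheory

theorem good_two_pvalues
    {Ω : Type*} [MeasurableSpace Ω] (μ : Measure Ω) [IsProbabilityMeasure μ]
    (x₁ x₂ : Ω → ℝ) (hmeas₁ : Measurable x₁) (hmeas₂ : Measurable x₂)
    (hunif₁ : μ.map x₁ = volume.restrict (Set.Ioc 0 1))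
    (hunif₂ : μ.map x₂ = volume.restrict (Set.Ioc 0 1))
    (hindep : IndepFun x₁ x₂ μ)
    (w₁ w₂ : ℝ) (hw₂ : 0 < w₂) (hw : w₂ < w₁)
    (τ : ℝ) (hτ : τ ∈ Set.Ioc (0 : ℝ) 1) :
    μ {ω | x₁ ω ^ w₁ * x₂ ω ^ w₂ ≤ τ} =
      ENNReal.ofReal ((w₁ - w₂)⁻¹ * (w₁ * τ ^ (1 / w₁) - w₂ * τ ^ (1 / w₂))) := by
  obtain ⟨hτ0, hτ1⟩ := hτ
  have hw₁ : 0 < w₁ := hw₂.trans hw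
  set ν : Measure ℝ := volume.restrict (Set.Ioc 0 1) with hν
  have hS : MeasurableSet {p : ℝ × ℝ | p.1 ^ w₁ * p.2 ^ w₂ ≤ τ} :=
    measurableSet_le ((measurable_fst.pow_const w₁).mul (measurable_snd.pow_const w₂))
      measurable_const
  have hmap : μ.map (fun ω => (x₁ ω, x₂ ω)) = ν.prod ν := by
    rw [(indepFun_iff_map_prod_eq_prod_map_map hmeas₁.aemeasurable
      hmeas₂.aemeasurable).mp hindep, hunif₁, hunif₂]
  have h1 : μ {ω | x₁ ω ^ w₁ * x₂ ω ^ w₂ ≤ τ} =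
      ν.prod ν {p : ℝ × ℝ | p.1 ^ w₁ * p.2 ^ w₂ ≤ τ} := by
    rw [← hmap, Measure.map_apply (hmeas₁.prodMk hmeas₂) hS]
    rfl
  rw [h1, Measure.prod_apply hS]
  set f : ℝ → ℝ := fun a => min ((τ / a ^ w₁) ^ (1 / w₂)) 1 with hf
  have hkey : ∀ a ∈ Set.Ioc (0:ℝ) 1,
      ν (Prod.mk a ⁻¹' {p : ℝ × ℝ | p.1 ^ w₁ * p.2 ^ w₂ ≤ τ}) = ENNReal.ofReal (f a) := by
    intro a ha
    obtain ⟨ha0, ha1⟩ := ha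
    have haw : (0:ℝ) < a ^ w₁ := Real.rpow_pos_of_pos ha0 _
    have hc0 : (0:ℝ) < (τ / a ^ w₁) ^ (1 / w₂) :=
      Real.rpow_pos_of_pos (div_pos hτ0 haw) _
    have hcw : ((τ / a ^ w₁) ^ (1 / w₂)) ^ w₂ = τ / a ^ w₁ := by
      rw [one_div, Real.rpow_inv_rpow (div_pos hτ0 haw).le hw₂.ne']
    have hset : Prod.mk a ⁻¹' {p : ℝ × ℝ | p.1 ^ w₁ * p.2 ^ w₂ ≤ τ} ∩ Set.Ioc 0 1
        = Set.Ioc 0 (min ((τ / a ^ w₁) ^ (1 / w₂)) 1) := by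
      ext b
      simp only [Set.mem_inter_iff, Set.mem_preimage, Set.mem_setOf_eq, Set.mem_Ioc,
        le_min_iff]
      constructor
      · rintro ⟨h, hb0, hb1⟩
        refine ⟨hb0, ?_, hb1⟩
        have h2 : b ^ w₂ ≤ ((τ / a ^ w₁) ^ (1 / w₂)) ^ w₂ := by
          rw [hcw]; exact (le_div_iff₀ haw).2 (by linarith)
        exact (Real.rpow_le_rpow_iff hb0.le hc0.le hw₂).1 h2
      · rintro ⟨hb0, hbc, hb1⟩
        refine ⟨?_, hb0, hb1⟩
        have h2 : b ^ w₂ ≤ τ / a ^ w₁ := by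
          rw [← hcw]; exact Real.rpow_le_rpow hb0.le hbc hw₂.le
        calc a ^ w₁ * b ^ w₂ ≤ a ^ w₁ * (τ / a ^ w₁) := by nlinarith
          _ = τ := by field_simp
    have hmb : MeasurableSet (Prod.mk a ⁻¹' {p : ℝ × ℝ | p.1 ^ w₁ * p.2 ^ w₂ ≤ τ}) :=
      hS.preimage measurable_prodMk_left
    rw [hν, Measure.restrict_apply hmb, hset, Real.volume_Ioc, sub_zero]
  have hfm : Measurable f :=
    ((measurable_const.div (measurable_id.pow_const w₁)).pow_const _).min measurable_const
  have hint : IntegrableOn f (Set.Ioc (0:ℝ) 1) := by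
    refine Integrable.mono' (integrable_const (1:ℝ)) hfm.aestronglyMeasurable ?_
    filter_upwards [self_mem_ae_restrict measurableSet_Ioc] with a ha
    have h0 : 0 ≤ f a :=
      le_min (Real.rpow_nonneg (div_nonneg hτ0.le (Real.rpow_nonneg ha.1.le _)) _) zero_le_one
    have h1 : f a ≤ 1 := min_le_right _ _
    rw [Real.norm_eq_abs, abs_le]
    exact ⟨by linarith, h1⟩
  have hnn : 0 ≤ᵐ[volume.restrict (Set.Ioc (0:ℝ) 1)] f := by
    filter_upwards [self_mem_ae_restrict measurableSet_Ioc] with a ha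
    exact le_min (Real.rpow_nonneg (div_nonneg hτ0.le (Real.rpow_nonneg ha.1.le _)) _) zero_le_one
  have h2 : ∫⁻ a, ν (Prod.mk a ⁻¹' {p : ℝ × ℝ | p.1 ^ w₁ * p.2 ^ w₂ ≤ τ}) ∂ν
      = ∫⁻ a in Set.Ioc (0:ℝ) 1, ENNReal.ofReal (f a) := by
    rw [hν]
    exact setLIntegral_congr_fun measurableSet_Ioc hkey
  rw [h2, ← ofReal_integral_eq_lintegral_ofReal hint hnn]
  congr 1
  -- now compute the real integral
  set t : ℝ := τ ^ (1 / w₁) with ht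
  have ht0 : 0 < t := Real.rpow_pos_of_pos hτ0 _
  have ht1 : t ≤ 1 := Real.rpow_le_one hτ0.le hτ1 (by positivity)
  have htw : t ^ w₁ = τ := by
    rw [ht, one_div, Real.rpow_inv_rpow hτ0.le hw₁.ne']
  set r : ℝ := -(w₁ * (1 / w₂)) with hrdef
  have hrlt : r + 1 < 0 := by
    have : 1 < w₁ / w₂ := (one_lt_div hw₂).2 hw
    rw [hrdef]; rw [mul_one_div]; linarith
  have hr0 : r + 1 ≠ 0 := ne_of_lt hrlt
  set B : ℝ := τ ^ (1 / w₂) with hB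
  have hio1 : ∫ a in Set.Ioc (0:ℝ) t, f a = t := by
    rw [setIntegral_congr_fun measurableSet_Ioc (g := fun _ => (1:ℝ)) ?_]
    · simp [Real.volume_Ioc, ENNReal.toReal_ofReal ht0.le, ht0.le]
    · intro a ha
      have ha0 : 0 < a := ha.1
      have h1c : 1 ≤ (τ / a ^ w₁) ^ (1 / w₂) := by
        refine Real.one_le_rpow ?_ (by positivity)
        rw [le_div_iff₀ (Real.rpow_pos_of_pos ha0 _), one_mul]
        calc a ^ w₁ ≤ t ^ w₁ := Real.rpow_le_rpow ha0.le ha.2 hw₁.le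
          _ = τ := htw
      show min ((τ / a ^ w₁) ^ (1 / w₂)) 1 = 1
      exact min_eq_right h1c
  have hio2 : ∫ a in Set.Ioc t 1, f a = B * ((1 - t ^ (r + 1)) / (r + 1)) := by
    rw [setIntegral_congr_fun measurableSet_Ioc (g := fun a => B * a ^ r) ?_]
    · rw [MeasureTheory.integral_const_mul, ← intervalIntegral.integral_of_le ht1,
        integral_rpow (Or.inr ⟨by linarith, fun hmem => absurd hmem.1 (by simp [Set.uIcc_of_le ht1]; linarith)⟩),
        Real.one_rpow]
    · intro a ha
      obtain ⟨hta, ha1⟩ := ha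
      have ha0 : 0 < a := ht0.trans hta
      have hlt : (τ / a ^ w₁) ^ (1 / w₂) < 1 := by
        refine Real.rpow_lt_one (by positivity) ?_ (by positivity)
        rw [div_lt_one (Real.rpow_pos_of_pos ha0 _)]
        calc τ = t ^ w₁ := htw.symm
          _ < a ^ w₁ := Real.rpow_lt_rpow ht0.le hta hw₁
      show min ((τ / a ^ w₁) ^ (1 / w₂)) 1 = B * a ^ r
      rw [min_eq_left hlt.le, Real.div_rpow hτ0.le (Real.rpow_nonneg ha0.le _),
        ← Real.rpow_mul ha0.le, div_eq_mul_inv, ← Real.rpow_neg ha0.le, hB, hrdef,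
        mul_one_div]
  have hsplit : ∫ a in Set.Ioc (0:ℝ) 1, f a
      = (∫ a in Set.Ioc (0:ℝ) t, f a) + ∫ a in Set.Ioc t 1, f a := by
    rw [← Set.Ioc_union_Ioc_eq_Ioc ht0.le ht1,
      setIntegral_union (Set.Ioc_disjoint_Ioc_of_le le_rfl) measurableSet_Ioc
        (hint.mono_set (Set.Ioc_subset_Ioc_right ht1))
        (hint.mono_set (Set.Ioc_subset_Ioc_left ht0.le))]
  have hBt : B * t ^ (r + 1) = t := by
    rw [hB, ht, ← Real.rpow_mul hτ0.le, ← Real.rpow_add hτ0]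
    congr 1
    rw [hrdef]
    field_simp
    ring
  have hr1 : r + 1 = (w₂ - w₁) / w₂ := by
    rw [hrdef]; field_simp; ring
  rw [hsplit, hio1, hio2, mul_div_assoc', mul_sub, mul_one, hBt, hr1]
  have h3 : w₂ - w₁ ≠ 0 := by intro h; linarith
  have h4 : w₁ - w₂ ≠ 0 := by intro h; linarith
  field_simp
  ring
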